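/- For every l with 2 ≤ l ≤ 8, the group of K-isometries of L_l is finite. -/

import Mathlib

/- The lattice `L_l = ℤ^{1+l}` with the diagonal form `B` of signature `(1, -1, …, -1)`
and the distinguished element `k = -3e₀ + e₁ + ⋯ + e_l`. -/

/-- The intersection form `B` on `L_l = ℤ^{1+l}`. -/
def interForm (l : ℕ) (x y : Fin (l + 1) → ℤ) : ℤ :=
  ∑ i : Fin (l + 1), (if i = 0 then 1 else -1) * x i * y i

/-- The canonical class `k = -3e₀ + e₁ + ⋯ + e_l`. -/
def canonClass (l : ℕ) : Fin (l + 1) → ℤ := fun i => if i = 0 then -3 else 1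

lemma interForm_expand (l : ℕ) (x y : Fin (l + 1) → ℤ) :
    interForm l x y = x 0 * y 0 - ∑ i : Fin l, x i.succ * y i.succ := by
  rw [interForm, Fin.sum_univ_succ]
  have h : ∀ i : Fin l, (if (i.succ : Fin (l+1)) = 0 then (1:ℤ) else -1) * x i.succ * y i.succ = -(x i.succ * y i.succ) := by
    intro i; rw [if_neg (Fin.succ_ne_zero i)]; ring
  rw [Finset.sum_congr rfl (fun i _ => h i), Finset.sum_neg_distrib, if_pos rfl]
  ring

lemma interForm_single (l : ℕ) (j : Fin (l+1)) (w : Fin (l+1) → ℤ) :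
    interForm l (Pi.single j 1) w = (if j = 0 then 1 else -1) * w j := by
  rw [interForm]
  rw [Finset.sum_eq_single j]
  · simp
  · intro b _ hb; simp [Pi.single_apply, hb]
  · simp

lemma coord_bound (l : ℕ) (h8 : l ≤ 8) (v : Fin (l+1) → ℤ)
    (hc : |interForm l v v| ≤ 1)
    (hd : |interForm l v (canonClass l)| ≤ 3) :
    ∀ i, |v i| ≤ 19 := by
  rw [interForm_expand] at hc hd
  simp only [canonClass, if_pos rfl, if_true] at hd
  have hd' : |v 0 * (-3) - ∑ i : Fin l, v i.succ| ≤ 3 := by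
    convert hd using 3
    apply Finset.sum_congr rfl
    intro i _
    simp [Fin.succ_ne_zero]
  set a := v 0 with ha
  set s := ∑ i : Fin l, v i.succ with hs
  set q := ∑ i : Fin l, v i.succ * v i.succ with hq
  have hqe : q = ∑ i : Fin l, (v i.succ)^2 := by
    apply Finset.sum_congr rfl; intro i _; ring
  have hcs : s^2 ≤ (l : ℤ) * q := by
    rw [hqe, hs]
    have := sq_sum_le_card_mul_sum_sq (s := (Finset.univ : Finset (Fin l)))
      (f := fun i => v i.succ)
    simpa using this
  have hqnn : 0 ≤ q := by rw [hqe]; positivity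
  obtain ⟨hc1, hc2⟩ := abs_le.mp hc
  obtain ⟨hd1, hd2⟩ := abs_le.mp hd'
  have hl : (l : ℤ) ≤ 8 := by exact_mod_cast h8
  have haa : a * a ≤ 340 := by
    nlinarith [sq_nonneg (s + 3*a), sq_nonneg a, sq_nonneg s,
      sq_nonneg (a - 6*(s+3*a)), sq_nonneg (a + 6*(s+3*a))]
  intro i
  have hvi : v i * v i ≤ 361 := by
    rcases eq_or_ne i 0 with rfl | hi
    · nlinarith
    · obtain ⟨j, rfl⟩ := Fin.eq_succ_of_ne_zero hi
      have hle : v j.succ * v j.succ ≤ q := by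
        rw [hqe]
        have : (v j.succ)^2 ≤ ∑ i : Fin l, (v i.succ)^2 :=
          Finset.single_le_sum (f := fun i => (v i.succ)^2) (fun i _ => sq_nonneg _)
            (Finset.mem_univ j)
        nlinarith
      nlinarith
  nlinarith [abs_nonneg (v i), sq_abs (v i), abs_mul_abs_self (v i)]

/-- For every `l` with `2 ≤ l ≤ 8`, the group of `K`-isometries of `L_l`
(ℤ-linear automorphisms preserving `B` and fixing `k`) is finite. -/
theorem kIsometries_finite (l : ℕ) (h2 : 2 ≤ l) (h8 : l ≤ 8) :
    Set.Finite
      {φ : (Fin (l + 1) → ℤ) ≃ₗ[ℤ] (Fin (l + 1) → ℤ) |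
        (∀ x y, interForm l (φ x) (φ y) = interForm l x y) ∧
          φ (canonClass l) = canonClass l} := by
  have key : ∀ φ ∈ {φ : (Fin (l + 1) → ℤ) ≃ₗ[ℤ] (Fin (l + 1) → ℤ) |
        (∀ x y, interForm l (φ x) (φ y) = interForm l x y) ∧
          φ (canonClass l) = canonClass l}, ∀ j i, φ (Pi.single j 1) i ∈ Set.Icc (-19:ℤ) 19 := by
    rintro φ ⟨hB, hk⟩ j i
    have hc : |interForm l (φ (Pi.single j 1)) (φ (Pi.single j 1))| ≤ 1 := by
      rw [hB, interForm_single, Pi.single_eq_same]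
      split_ifs <;> norm_num
    have hd : |interForm l (φ (Pi.single j 1)) (canonClass l)| ≤ 3 := by
      rw [← hk, hB, interForm_single, canonClass]
      split_ifs <;> norm_num
    have := coord_bound l h8 _ hc hd i
    rw [abs_le] at this
    exact this
  apply Set.Finite.of_finite_image (f := fun φ => fun j => φ (Pi.single j 1))
  · apply Set.Finite.subset (Set.Finite.pi fun _ : Fin (l+1) =>
      Set.Finite.pi fun _ : Fin (l+1) => Set.finite_Icc (-19:ℤ) 19)
    rintro _ ⟨φ, hφ, rfl⟩
    rw [Set.mem_pi]
    intro j _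
    rw [Set.mem_pi]
    intro i _
    exact key φ hφ j i
  · intro φ hφ ψ hψ h
    apply LinearEquiv.toLinearMap_injective
    apply LinearMap.pi_ext
    intro i x
    have hj : φ (Pi.single i 1) = ψ (Pi.single i 1) := congrFun h i
    have hx : (Pi.single i x : Fin (l+1) → ℤ) = x • Pi.single i 1 := by
      funext t
      simp [Pi.single_apply, mul_ite]
    simp only [LinearEquiv.coe_coe, hx, map_smul, hj]
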